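/- Let q ∈ ℂ, let n, p ≥ 1 be integers with n ≥ p+1, let i be an integer with 0 ≤ i ≤ n-1-p, and let J ⊆ [n-1] satisfy {i+1, …, i+p+1} ∩ J = ∅ and i ∈ J ∪ {0}. Then Σ_{I ⊆ {i+1,…,i+p}} (-1)^{|I|} L^{(q)}_{n, I ∪ J} = [p+1]_{-q} · Σ (−q)^{|V'|}(q−1)^{|U'|} η^{(q)}_{n, U' ∪ (V'−1) ∪ V' ∪ {i+1,…,i+p}}, where the last sum ranges over all pairs (U', V') with U' ⊆ J, V' ⊆ Peak(J), U' ∩ V' = ∅, and V'−1 = {v−1 : v ∈ V'}. -/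

import Mathlib

open Finset
open scoped Classical

namespace ExtPeaks

/-- `fget g j` is the `j`-th entry (1-indexed) of the sequence `g : Fin n → ℕ`,
so `fget g j = g ⟨j - 1, _⟩` for `1 ≤ j ≤ n`. -/
def fget {n : ℕ} (g : Fin n → ℕ) (j : ℕ) : ℕ :=
  if h : j - 1 < n then g ⟨j - 1, h⟩ else 0

/-- `Peak(I) = {i ∈ I : i ≥ 2 and i - 1 ∉ I}`. -/
def peakOf (I : Finset ℕ) : Finset ℕ :=
  I.filter fun i => 2 ≤ i ∧ i - 1 ∉ I

/-- The monomial `x_{i_1} ⋯ x_{i_n}` attached to a sequence `g`, as a `Finsupp`. -/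
noncomputable def monomialOf {n : ℕ} (g : Fin n → ℕ) : ℕ →₀ ℕ :=
  ∑ j, Finsupp.single (g j) 1

/-- The (finitely many) weakly increasing sequences of positive integers of length `n`,
satisfying the peak condition `i_{j-1} < i_{j+1}` for `j ∈ Peak(I)`, with monomial `d`. -/
noncomputable def Lseqs (n : ℕ) (I : Finset ℕ) (d : ℕ →₀ ℕ) : Finset (Fin n → ℕ) :=
  (Fintype.piFinset fun _ => d.support).filter fun g =>
    (∀ j k : Fin n, j ≤ k → g j ≤ g k) ∧ (∀ j, 1 ≤ g j) ∧
    (∀ j ∈ peakOf I, fget g (j - 1) < fget g (j + 1)) ∧ monomialOf g = d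

/-- The `q`-fundamental quasisymmetric function `L^{(q)}_{n,I}`, as a formal power
series in the variables `x_1, x_2, …` (defined coefficientwise). -/
noncomputable def Lq (q : ℂ) (n : ℕ) (I : Finset ℕ) : MvPowerSeries ℕ ℂ :=
  fun d => ∑ g ∈ Lseqs n I d,
    q ^ (I.filter fun j => fget g j = fget g (j + 1)).card *
      (q + 1) ^ (Finset.image g Finset.univ).card

/-- The weakly increasing sequences of positive integers of length `s` with
`i_j = i_{j+1}` for all `j ∈ I`, with monomial `d`. -/
noncomputable def etaSeqs (s : ℕ) (I : Finset ℕ) (d : ℕ →₀ ℕ) : Finset (Fin s → ℕ) :=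
  (Fintype.piFinset fun _ => d.support).filter fun g =>
    (∀ j k : Fin s, j ≤ k → g j ≤ g k) ∧ (∀ j, 1 ≤ g j) ∧
    (∀ j ∈ I, fget g j = fget g (j + 1)) ∧ monomialOf g = d

/-- The enriched `q`-monomial quasisymmetric function `η^{(q)}_{s,I}`. -/
noncomputable def etaq (q : ℂ) (s : ℕ) (I : Finset ℕ) : MvPowerSeries ℕ ℂ :=
  fun d => ∑ g ∈ etaSeqs s I d, (q + 1) ^ (Finset.image g Finset.univ).card

/-- `I` is a `p`-extended peak set: `I ∪ {0}` contains no `p + 1` consecutive integers. -/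
def IsExtPeakSet (p : ℕ) (I : Finset ℕ) : Prop :=
  ∀ a : ℕ, ¬ Finset.Icc a (a + p) ⊆ insert 0 I

/-- `s^{(p)}_n`: the number of `p`-extended peak subsets of `[n-1]`, with `s^{(p)}_0 = 0`. -/
noncomputable def sCount (p n : ℕ) : ℕ :=
  if n = 0 then 0
  else ((Finset.Icc 1 (n - 1)).powerset.filter fun I => IsExtPeakSet p I).card

/-- The value `π(j)` of the permutation at the (1-indexed) position `j`,
as an element of `{1, …, n}`. -/
def pval {n : ℕ} (π : Equiv.Perm (Fin n)) (j : ℕ) : ℕ :=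
  if h : j - 1 < n then (π ⟨j - 1, h⟩ : ℕ) + 1 else 0

/-- The descent set `Des(π) = {1 ≤ i ≤ n-1 : π(i) > π(i+1)}`. -/
def desSet {n : ℕ} (π : Equiv.Perm (Fin n)) : Finset ℕ :=
  (Finset.Icc 1 (n - 1)).filter fun i => pval π (i + 1) < pval π i

/-- The peak set `Peak(π) = {2 ≤ i ≤ n-1 : π(i-1) < π(i) > π(i+1)}`. -/
def peakSet {n : ℕ} (π : Equiv.Perm (Fin n)) : Finset ℕ :=
  (Finset.Icc 2 (n - 1)).filter fun i =>
    pval π (i - 1) < pval π i ∧ pval π (i + 1) < pval π i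

/-- The `p`-extended peak set `Peak_p(π)` of a permutation: the descents `i` such that
`i ≤ p - 1` or some position `i - j` (with `1 ≤ j ≤ p` and `i - j ≥ 1`) is not a descent. -/
def peakP {n : ℕ} (p : ℕ) (π : Equiv.Perm (Fin n)) : Finset ℕ :=
  (desSet π).filter fun i =>
    i ≤ p - 1 ∨ ∃ j ∈ Finset.Icc 1 p, 1 ≤ i - j ∧ i - j ∉ desSet π

/-- `ρ_p = exp(-iπ(p-1)/(p+1))`. -/
noncomputable def rho (p : ℕ) : ℂ :=
  Complex.exp (-((Real.pi : ℂ) * ((p : ℂ) - 1) / ((p : ℂ) + 1)) * Complex.I)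

/-- `[m]_c = 1 + c + ⋯ + c^(m-1)`. -/
noncomputable def qint (m : ℕ) (c : ℂ) : ℂ := ∑ j ∈ Finset.range m, c ^ j

/-- The entry of the transition matrix `B^{(q)}` at row `J`, column `I`:
`Σ (-q)^{|K|} (q-1)^{|J'|}` over pairs `(J', K)` with `J' ⊆ I`, `K ⊆ Peak(I)`,
`J' ∩ K = ∅` and `J' ∪ (K-1) ∪ K = J`. -/
noncomputable def Bentry (q : ℂ) (J I : Finset ℕ) : ℂ :=
  ∑ J' ∈ I.powerset, ∑ K ∈ (peakOf I).powerset,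
    if Disjoint J' K ∧ J' ∪ K.image (· - 1) ∪ K = J then
      (-q) ^ K.card * (q - 1) ^ J'.card
    else 0

/-- The collection of all subsets of `[n-1]` (the empty collection when `n = 0`,
so that `B_0` is the empty matrix). -/
def subsetsOf (n : ℕ) : Finset (Finset ℕ) :=
  if n = 0 then ∅ else (Finset.Icc 1 (n - 1)).powerset

/-- The matrix `B_n^{(q)}`, with rows and columns indexed by the subsets of `[n-1]`. -/
noncomputable def Bmat (q : ℂ) (n : ℕ) : Matrix ↥(subsetsOf n) ↥(subsetsOf n) ℂ :=
  fun J I => Bentry q J.1 I.1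

/-- The entry of `A_n^{(q)}` at row `J'`, column `I'`, namely
`B_n^{(q)}(J' ∪ {n-1}, I' ∪ {n-1})`. -/
noncomputable def Aentry (q : ℂ) (n : ℕ) (J I : Finset ℕ) : ℂ :=
  Bentry q (insert (n - 1) J) (insert (n - 1) I)

/-- The matrix `A_n^{(q)}`, with rows and columns indexed by the subsets of `[n-2]`. -/
noncomputable def Amat (q : ℂ) (n : ℕ) :
    Matrix ↥(subsetsOf (n - 1)) ↥(subsetsOf (n - 1)) ℂ :=
  fun J I => Aentry q n J.1 I.1

/-- The dimension of the kernel of (the linear map associated with) `B_n^{(q)}`. -/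
noncomputable def dimKer (q : ℂ) (n : ℕ) : ℕ :=
  Module.finrank ℂ (LinearMap.ker (Matrix.mulVecLin (Bmat q n)))

/-! ### Auxiliary lemmas for the proof -/

lemma sum_powerset_pow (x : ℂ) (s : Finset ℕ) :
    ∑ t ∈ s.powerset, x ^ t.card = (x + 1) ^ s.card := by
  have h := Finset.prod_add (fun _ : ℕ => x) (fun _ => 1) s
  simp only [Finset.prod_const, Finset.prod_const_one, mul_one, one_pow] at h
  rw [h]

lemma sum_powerset_neg_one (s : Finset ℕ) :
    ∑ t ∈ s.powerset, (-1 : ℂ) ^ t.card = if s = ∅ then 1 else 0 := by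
  have h := Finset.sum_powerset_neg_one_pow_card (x := s)
  have h2 : ((∑ t ∈ s.powerset, (-1 : ℤ) ^ t.card : ℤ) : ℂ)
      = ∑ t ∈ s.powerset, (-1 : ℂ) ^ t.card := by push_cast; ring_nf
  rw [← h2, h]
  split <;> simp
lemma inner_U (q : ℂ) (ε : ℕ → Prop) (J V' : Finset ℕ) :
    ∑ U' ∈ J.powerset, (if Disjoint U' V' ∧ (∀ j ∈ U', ε j) then (q - 1) ^ U'.card else 0)
    = q ^ ((J.filter ε) \ V').card := by
  rw [← Finset.sum_filter]
  have hset : J.powerset.filter (fun U' => Disjoint U' V' ∧ (∀ j ∈ U', ε j))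
      = ((J.filter ε) \ V').powerset := by
    ext U'
    simp only [Finset.mem_filter, Finset.mem_powerset, Finset.disjoint_left]
    constructor
    · rintro ⟨hJs, hd, hε⟩
      intro x hx
      exact Finset.mem_sdiff.mpr ⟨Finset.mem_filter.mpr ⟨hJs hx, hε x hx⟩, fun hxV => hd hx hxV⟩
    · intro h
      refine ⟨fun x hx => (Finset.mem_filter.mp (Finset.mem_sdiff.mp (h hx)).1).1,
        fun x hx hxV => (Finset.mem_sdiff.mp (h hx)).2 hxV,
        fun x hx => (Finset.mem_filter.mp (Finset.mem_sdiff.mp (h hx)).1).2⟩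
  rw [hset]
  have := sum_powerset_pow (q - 1) ((J.filter ε) \ V')
  simpa using this

lemma rhs_sum (q : ℂ) (ε : ℕ → Prop) (J : Finset ℕ) (p i : ℕ) :
    ∑ U' ∈ J.powerset, ∑ V' ∈ (peakOf J).powerset.filter (fun V' => Disjoint U' V'),
      (-q) ^ V'.card * (q - 1) ^ U'.card *
        (if (∀ j ∈ U' ∪ V'.image (· - 1) ∪ V' ∪ Finset.Icc (i+1) (i+p), ε j) then 1 else 0)
    = (if ∀ j ∈ Finset.Icc (i+1) (i+p), ε j then 1 else 0) *
      (if (∀ j ∈ peakOf J, ¬(ε (j - 1) ∧ ε j)) then q ^ (J.filter ε).card else 0) := by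
  classical
  have step1 : ∀ U' : Finset ℕ,
      ∑ V' ∈ (peakOf J).powerset.filter (fun V' => Disjoint U' V'),
        (-q) ^ V'.card * (q - 1) ^ U'.card *
          (if (∀ j ∈ U' ∪ V'.image (· - 1) ∪ V' ∪ Finset.Icc (i+1) (i+p), ε j) then 1 else 0)
      = ∑ V' ∈ (peakOf J).powerset,
          (if ((∀ v ∈ V', ε v) ∧ (∀ v ∈ V', ε (v - 1)) ∧ (∀ j ∈ Finset.Icc (i+1) (i+p), ε j)) then
              (-q) ^ V'.card else 0) *
          (if Disjoint U' V' ∧ (∀ j ∈ U', ε j) then (q - 1) ^ U'.card else 0) := by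
    intro U'
    rw [← Finset.sum_filter_add_sum_filter_not ((peakOf J).powerset)
      (fun V' => Disjoint U' V')]
    have hz : ∑ V' ∈ (peakOf J).powerset.filter (fun V' => ¬ Disjoint U' V'),
        (if ((∀ v ∈ V', ε v) ∧ (∀ v ∈ V', ε (v - 1)) ∧ (∀ j ∈ Finset.Icc (i+1) (i+p), ε j)) then
            (-q) ^ V'.card else 0) *
        (if Disjoint U' V' ∧ (∀ j ∈ U', ε j) then (q - 1) ^ U'.card else 0) = 0 := by
      apply Finset.sum_eq_zero
      intro V' hV'
      simp only [Finset.mem_filter] at hV'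
      rw [if_neg (show ¬(Disjoint U' V' ∧ ∀ j ∈ U', ε j) from fun h => hV'.2 h.1), mul_zero]
    rw [hz, add_zero]
    apply Finset.sum_congr rfl
    intro V' hV'
    simp only [Finset.mem_filter] at hV'
    have hiff : (∀ j ∈ U' ∪ V'.image (· - 1) ∪ V' ∪ Finset.Icc (i+1) (i+p), ε j) ↔
        (((∀ v ∈ V', ε v) ∧ (∀ v ∈ V', ε (v - 1)) ∧ (∀ j ∈ Finset.Icc (i+1) (i+p), ε j)) ∧ (∀ j ∈ U', ε j)) := by
      simp only [Finset.forall_mem_union]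
      constructor
      · rintro ⟨⟨⟨hU, hIm⟩, hV⟩, hP⟩
        exact ⟨⟨hV, fun v hv => hIm _ (Finset.mem_image_of_mem _ hv), hP⟩, hU⟩
      · rintro ⟨⟨hV, hIm, hP⟩, hU⟩
        refine ⟨⟨⟨hU, ?_⟩, hV⟩, hP⟩
        intro x hx
        obtain ⟨v, hv, rfl⟩ := Finset.mem_image.mp hx
        exact hIm v hv
    by_cases hcond : ((∀ v ∈ V', ε v) ∧ (∀ v ∈ V', ε (v - 1)) ∧ (∀ j ∈ Finset.Icc (i+1) (i+p), ε j))
    · by_cases hU : ∀ j ∈ U', ε j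
      · rw [if_pos (hiff.mpr ⟨hcond, hU⟩), if_pos hcond, if_pos ⟨hV'.2, hU⟩, mul_one]
      · rw [if_neg (fun h => hU (hiff.mp h).2),
          if_neg (show ¬(Disjoint U' V' ∧ ∀ j ∈ U', ε j) from fun h => hU h.2)]
        simp
    · rw [if_neg (fun h => hcond (hiff.mp h).1), if_neg hcond]
      simp
  rw [Finset.sum_congr rfl (fun U' _ => step1 U')]
  rw [Finset.sum_comm]
  have step2 : ∀ V' ∈ (peakOf J).powerset,
      ∑ U' ∈ J.powerset,
        (if ((∀ v ∈ V', ε v) ∧ (∀ v ∈ V', ε (v - 1)) ∧ (∀ j ∈ Finset.Icc (i+1) (i+p), ε j)) then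
            (-q) ^ V'.card else 0) *
        (if Disjoint U' V' ∧ (∀ j ∈ U', ε j) then (q - 1) ^ U'.card else 0)
      = (if ((∀ v ∈ V', ε v) ∧ (∀ v ∈ V', ε (v - 1)) ∧ (∀ j ∈ Finset.Icc (i+1) (i+p), ε j)) then
            (-q) ^ V'.card else 0) * q ^ ((J.filter ε) \ V').card := by
    intro V' _
    rw [← Finset.mul_sum, inner_U]
  rw [Finset.sum_congr rfl step2]
  set B := (peakOf J).filter (fun j => ε j ∧ ε (j - 1)) with hB
  set c := (J.filter ε).card with hc
  by_cases hP0 : ∀ j ∈ Finset.Icc (i+1) (i+p), ε j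
  · have key : ∀ V' ∈ (peakOf J).powerset,
        (if ((∀ v ∈ V', ε v) ∧ (∀ v ∈ V', ε (v - 1)) ∧ (∀ j ∈ Finset.Icc (i+1) (i+p), ε j)) then
            (-q) ^ V'.card else 0) * q ^ ((J.filter ε) \ V').card
        = (if V' ⊆ B then ((-1 : ℂ)) ^ V'.card else 0) * q ^ c := by
      intro V' hV'
      simp only [Finset.mem_powerset] at hV'
      by_cases hcond : (∀ v ∈ V', ε v) ∧ (∀ v ∈ V', ε (v - 1))
      · have hVB : V' ⊆ B := by
          intro v hv
          simp only [hB, Finset.mem_filter]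
          exact ⟨hV' hv, hcond.1 v hv, hcond.2 v hv⟩
        have hVJε : V' ⊆ J.filter ε := by
          intro v hv
          simp only [Finset.mem_filter]
          exact ⟨Finset.filter_subset _ _ (hV' hv), hcond.1 v hv⟩
        have hcard : ((J.filter ε) \ V').card = c - V'.card := by
          rw [Finset.card_sdiff_of_subset hVJε]
        have hle : V'.card ≤ c := Finset.card_le_card hVJε
        rw [if_pos ⟨hcond.1, hcond.2, hP0⟩, if_pos hVB, hcard, neg_pow,
          mul_assoc, ← pow_add, Nat.add_sub_cancel' hle]
      · have hnB : ¬ V' ⊆ B := by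
          intro hsub
          apply hcond
          constructor <;> intro v hv <;>
            · have := hsub hv
              simp only [hB, Finset.mem_filter] at this
              tauto
        rw [if_neg (fun h => hcond ⟨h.1, h.2.1⟩), if_neg hnB, zero_mul, zero_mul]
    rw [Finset.sum_congr rfl key, ← Finset.sum_mul]
    have hBsub : B ⊆ peakOf J := Finset.filter_subset _ _
    have hsum : ∑ V' ∈ (peakOf J).powerset, (if V' ⊆ B then ((-1 : ℂ)) ^ V'.card else 0)
        = ∑ V' ∈ B.powerset, ((-1 : ℂ)) ^ V'.card := by
      rw [← Finset.sum_filter]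
      congr 1
      ext V'
      simp only [Finset.mem_filter, Finset.mem_powerset]
      exact ⟨fun h => h.2, fun h => ⟨h.trans hBsub, h⟩⟩
    rw [hsum, sum_powerset_neg_one, if_pos hP0, one_mul]
    have hBempty : (B = ∅) ↔ (∀ j ∈ peakOf J, ¬(ε (j - 1) ∧ ε j)) := by
      rw [Finset.filter_eq_empty_iff]
      constructor
      · intro h j hj hc
        exact h hj ⟨hc.2, hc.1⟩
      · intro h x hx hc
        exact h x hx ⟨hc.2, hc.1⟩
    by_cases hpk : ∀ j ∈ peakOf J, ¬(ε (j - 1) ∧ ε j)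
    · rw [if_pos (hBempty.mpr hpk), if_pos hpk, one_mul]
    · rw [if_neg (fun h => hpk (hBempty.mp h)), if_neg hpk, zero_mul]
  · rw [if_neg hP0, zero_mul]
    apply Finset.sum_eq_zero
    intro V' _
    rw [if_neg (fun h => hP0 h.2.2), zero_mul]

lemma inner_sum (q : ℂ) (ε : ℕ → Prop) (p i : ℕ) :
    ∑ I ∈ (Finset.Icc (i+1) (i+p)).powerset, (-1:ℂ)^I.card *
      (if (∀ j ∈ I, i+2 ≤ j → j-1 ∉ I → ¬(ε (j-1) ∧ ε j)) then q ^ (I.filter ε).card else 0)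
    = if (∀ j ∈ Finset.Icc (i+1) (i+p), ε j) then qint (p+1) (-q) else 0 := by
  classical
  by_cases hall : ∀ j ∈ Finset.Icc (i+1) (i+p), ε j
  · rw [if_pos hall]
    have hstep : ∀ I ∈ (Finset.Icc (i+1) (i+p)).powerset,
        (-1:ℂ)^I.card *
          (if (∀ j ∈ I, i+2 ≤ j → j-1 ∉ I → ¬(ε (j-1) ∧ ε j)) then q ^ (I.filter ε).card else 0)
        = if (∀ j ∈ I, i+2 ≤ j → j-1 ∈ I) then (-q) ^ I.card else 0 := by
      intro I hI
      rw [Finset.mem_powerset] at hI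
      have hfilter : I.filter ε = I :=
        Finset.filter_true_of_mem (fun j hj => hall j (hI hj))
      have hiff : (∀ j ∈ I, i+2 ≤ j → j-1 ∉ I → ¬(ε (j-1) ∧ ε j))
          ↔ (∀ j ∈ I, i+2 ≤ j → j-1 ∈ I) := by
        constructor
        · intro h j hj h2
          by_contra h3
          have hjP := Finset.mem_Icc.mp (hI hj)
          have hε1 : ε (j-1) := hall _ (Finset.mem_Icc.mpr (by omega))
          have hε2 : ε j := hall _ (hI hj)
          exact h j hj h2 h3 ⟨hε1, hε2⟩
        · intro h j hj h2 h3 _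
          exact h3 (h j hj h2)
      rw [hfilter]
      by_cases hc : ∀ j ∈ I, i+2 ≤ j → j-1 ∈ I
      · rw [if_pos (hiff.mpr hc), if_pos hc, ← mul_pow, neg_one_mul]
      · rw [if_neg (fun h => hc (hiff.mp h)), if_neg hc, mul_zero]
    rw [Finset.sum_congr rfl hstep]
    have hmem : ∀ I ∈ (Finset.range (p+1)).image (fun k => Finset.Icc (i+1) (i+k)),
        I ⊆ Finset.Icc (i+1) (i+p) ∧ (∀ j ∈ I, i+2 ≤ j → j-1 ∈ I) := by
      intro I hI
      obtain ⟨k, hk, rfl⟩ := Finset.mem_image.mp hI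
      rw [Finset.mem_range] at hk
      constructor
      · intro x hx
        rw [Finset.mem_Icc] at hx ⊢
        omega
      · intro j hj h2
        rw [Finset.mem_Icc] at hj ⊢
        omega
    have himage : ∀ I, I ⊆ Finset.Icc (i+1) (i+p) → (∀ j ∈ I, i+2 ≤ j → j-1 ∈ I) →
        I ∈ (Finset.range (p+1)).image (fun k => Finset.Icc (i+1) (i+k)) := by
      intro I hIP hlc
      have hdown : ∀ d : ℕ, ∀ j ∈ I, i + 1 ≤ j - d → j - d ∈ I := by
        intro d
        induction d with
        | zero => intro j hj _; simpa using hj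
        | succ d ih =>
          intro j hj hle
          by_cases hd : j - d = j - (d+1)
          · rw [← hd]; exact ih j hj (by omega)
          · have h1 : j - d ∈ I := ih j hj (by omega)
            have h2 : i + 2 ≤ j - d := by omega
            have h3 := hlc _ h1 h2
            have h4 : j - d - 1 = j - (d+1) := by omega
            rwa [h4] at h3
      rw [Finset.mem_image]
      refine ⟨I.card, ?_, ?_⟩
      · rw [Finset.mem_range]
        have := Finset.card_le_card hIP
        rw [Nat.card_Icc] at this
        omega
      · rcases Finset.eq_empty_or_nonempty I with rfl | hne
        · simp [Finset.Icc_eq_empty_of_lt]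
        · set M := I.max' hne with hM
          have hMI : M ∈ I := I.max'_mem hne
          have hMP := Finset.mem_Icc.mp (hIP hMI)
          have hIeq : I = Finset.Icc (i+1) M := by
            ext t
            simp only [Finset.mem_Icc]
            constructor
            · intro ht
              exact ⟨(Finset.mem_Icc.mp (hIP ht)).1, Finset.le_max' I t ht⟩
            · rintro ⟨ht1, ht2⟩
              have h5 := hdown (M - t) M hMI (by omega)
              have he : M - (M - t) = t := by omega
              rwa [he] at h5
          have hcard : I.card = M - i := by
            rw [hIeq, Nat.card_Icc]; omega
          have hM2 : i + I.card = M := by rw [hcard]; omega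
          rw [hM2]
          exact hIeq.symm
    rw [← Finset.sum_subset
      (fun I hI => Finset.mem_powerset.mpr (hmem I hI).1)
      (fun I hIpow hnI => if_neg (fun hLC =>
        hnI (himage I (Finset.mem_powerset.mp hIpow) hLC)))]
    rw [Finset.sum_image (by
      intro x hx y hy hxy
      have hx' : (Finset.Icc (i+1) (i+x)).card = x := by rw [Nat.card_Icc]; omega
      have hy' : (Finset.Icc (i+1) (i+y)).card = y := by rw [Nat.card_Icc]; omega
      rw [← hx', ← hy']; exact congrArg Finset.card hxy)]
    have hfin : ∀ k ∈ Finset.range (p+1),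
        (if (∀ j ∈ Finset.Icc (i+1) (i+k), i+2 ≤ j → j-1 ∈ Finset.Icc (i+1) (i+k)) then
          (-q) ^ (Finset.Icc (i+1) (i+k)).card else 0) = (-q) ^ k := by
      intro k hk
      rw [if_pos (hmem _ (Finset.mem_image_of_mem _ hk)).2]
      congr 1
      rw [Nat.card_Icc]; omega
    rw [Finset.sum_congr rfl hfin]
    rfl
  · rw [if_neg hall]
    push_neg at hall
    obtain ⟨m, hmP, hεm⟩ := hall
    rw [← Finset.insert_erase hmP,
      Finset.sum_powerset_insert (Finset.notMem_erase m _)]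
    rw [← Finset.sum_add_distrib]
    apply Finset.sum_eq_zero
    intro I hI
    rw [Finset.mem_powerset] at hI
    have hmI : m ∉ I := fun h => Finset.notMem_erase m _ (hI h)
    have hcards : (insert m I).card = I.card + 1 := Finset.card_insert_of_notMem hmI
    have hfilt : (insert m I).filter ε = I.filter ε := by
      rw [Finset.filter_insert, if_neg hεm]
    have hiff : (∀ j ∈ insert m I, i+2 ≤ j → j-1 ∉ insert m I → ¬(ε (j-1) ∧ ε j))
        ↔ (∀ j ∈ I, i+2 ≤ j → j-1 ∉ I → ¬(ε (j-1) ∧ ε j)) := by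
      constructor
      · intro h j hjI h2 h3
        by_cases hjm : j - 1 = m
        · exact fun hc => hεm (hjm ▸ hc.1)
        · exact h j (Finset.mem_insert_of_mem hjI) h2
            (fun hc => (Finset.mem_insert.mp hc).elim hjm h3)
      · intro h j hj h2 h3
        rcases Finset.mem_insert.mp hj with rfl | hjI
        · exact fun hc => hεm hc.2
        · exact h j hjI h2 (fun hc => h3 (Finset.mem_insert_of_mem hc))
    rw [hcards, hfilt]
    by_cases hc : ∀ j ∈ I, i+2 ≤ j → j-1 ∉ I → ¬(ε (j-1) ∧ ε j)
    · rw [if_pos hc, if_pos (hiff.mpr hc), pow_succ]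
      ring
    · rw [if_neg hc, if_neg (fun h => hc (hiff.mp h))]
      simp
lemma peak_union (p i : ℕ) (I J : Finset ℕ)
    (hI : I ⊆ Finset.Icc (i+1) (i+p))
    (hJdisj : ∀ j ∈ J, j ∉ Finset.Icc (i+1) (i+p+1))
    (hiJ : i ∈ J ∨ i = 0) :
    peakOf (I ∪ J) = peakOf J ∪ I.filter (fun j => i+2 ≤ j ∧ j-1 ∉ I) := by
  ext j
  simp only [peakOf, Finset.mem_filter, Finset.mem_union]
  constructor
  · rintro ⟨hj, h2, hnot⟩
    rcases hj with hjI | hjJ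
    · have hjP := Finset.mem_Icc.mp (hI hjI)
      right
      refine ⟨hjI, ?_, fun h => hnot (Or.inl h)⟩
      by_contra hlt
      have hji : j = i + 1 := by omega
      rcases hiJ with hiJ' | hi0
      · exact hnot (Or.inr (by rw [hji]; simpa using hiJ'))
      · omega
    · left
      exact ⟨hjJ, h2, fun h => hnot (Or.inr h)⟩
  · rintro (⟨hjJ, h2, hnJ⟩ | ⟨hjI, h2, hnI⟩)
    · refine ⟨Or.inr hjJ, h2, ?_⟩
      rintro (hI' | hJ')
      · have := Finset.mem_Icc.mp (hI hI')
        exact hJdisj j hjJ (Finset.mem_Icc.mpr (by omega))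
      · exact hnJ hJ'
    · have hjP := Finset.mem_Icc.mp (hI hjI)
      refine ⟨Or.inl hjI, by omega, ?_⟩
      rintro (hI' | hJ')
      · exact hnI hI'
      · exact hJdisj _ hJ' (Finset.mem_Icc.mpr (by omega))

lemma main_comb (q : ℂ) (ε : ℕ → Prop) (p i : ℕ) (J : Finset ℕ)
    (hJdisj : ∀ j ∈ J, j ∉ Finset.Icc (i+1) (i+p+1))
    (hiJ : i ∈ J ∨ i = 0) :
    ∑ I ∈ (Finset.Icc (i+1) (i+p)).powerset, (-1:ℂ)^I.card *
      (if (∀ j ∈ peakOf (I ∪ J), ¬(ε (j-1) ∧ ε j)) then q ^ (((I ∪ J).filter ε).card) else 0)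
    = qint (p+1) (-q) *
      ∑ U' ∈ J.powerset, ∑ V' ∈ (peakOf J).powerset.filter (fun V' => Disjoint U' V'),
        (-q) ^ V'.card * (q - 1) ^ U'.card *
          (if (∀ j ∈ U' ∪ V'.image (· - 1) ∪ V' ∪ Finset.Icc (i+1) (i+p), ε j) then 1 else 0) := by
  rw [rhs_sum q ε J p i]
  have key : ∀ I ∈ (Finset.Icc (i+1) (i+p)).powerset,
      (-1:ℂ)^I.card *
        (if (∀ j ∈ peakOf (I ∪ J), ¬(ε (j-1) ∧ ε j)) then q ^ (((I ∪ J).filter ε).card) else 0)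
      = (if (∀ j ∈ peakOf J, ¬(ε (j - 1) ∧ ε j)) then q ^ (J.filter ε).card else 0) *
        ((-1:ℂ)^I.card *
          (if (∀ j ∈ I, i+2 ≤ j → j-1 ∉ I → ¬(ε (j-1) ∧ ε j)) then q ^ (I.filter ε).card else 0)) := by
    intro I hI
    rw [Finset.mem_powerset] at hI
    have hdisjIJ : Disjoint I J := by
      rw [Finset.disjoint_left]
      intro a haI haJ
      have := Finset.mem_Icc.mp (hI haI)
      exact hJdisj a haJ (Finset.mem_Icc.mpr (by omega))
    have hcard : ((I ∪ J).filter ε).card = (I.filter ε).card + (J.filter ε).card := by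
      rw [Finset.filter_union, Finset.card_union_of_disjoint
        (Finset.disjoint_filter_filter hdisjIJ)]
    have hpk : (∀ j ∈ peakOf (I ∪ J), ¬(ε (j-1) ∧ ε j)) ↔
        ((∀ j ∈ peakOf J, ¬(ε (j - 1) ∧ ε j)) ∧
          (∀ j ∈ I, i+2 ≤ j → j-1 ∉ I → ¬(ε (j-1) ∧ ε j))) := by
      rw [peak_union p i I J hI hJdisj hiJ]
      rw [Finset.forall_mem_union]
      constructor
      · rintro ⟨h1, h2⟩
        refine ⟨h1, fun j hj ha hb => h2 j (Finset.mem_filter.mpr ⟨hj, ha, hb⟩)⟩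
      · rintro ⟨h1, h2⟩
        refine ⟨h1, fun j hj => ?_⟩
        obtain ⟨hjI, ha, hb⟩ := Finset.mem_filter.mp hj
        exact h2 j hjI ha hb
    rw [hcard]
    by_cases h1 : ∀ j ∈ peakOf J, ¬(ε (j - 1) ∧ ε j)
    · by_cases h2 : ∀ j ∈ I, i+2 ≤ j → j-1 ∉ I → ¬(ε (j-1) ∧ ε j)
      · rw [if_pos (hpk.mpr ⟨h1, h2⟩), if_pos h1, if_pos h2, pow_add]
        ring
      · rw [if_neg (fun h => h2 (hpk.mp h).2), if_neg h2]
        ring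
    · rw [if_neg (fun h => h1 (hpk.mp h).1), if_neg h1]
      ring
  rw [Finset.sum_congr rfl key, ← Finset.mul_sum, inner_sum]
  by_cases hP : ∀ j ∈ Finset.Icc (i+1) (i+p), ε j
  · rw [if_pos hP, if_pos hP]
    ring
  · rw [if_neg hP, if_neg hP]
    ring

lemma fget_bridge {n : ℕ} (g : Fin n → ℕ) (hmono : ∀ j k : Fin n, j ≤ k → g j ≤ g k)
    (j : ℕ) (h2 : 2 ≤ j) (hjn : j + 1 ≤ n) :
    (fget g (j-1) < fget g (j+1)) ↔
      ¬((fget g (j-1) = fget g j) ∧ (fget g j = fget g (j+1))) := by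
  have hab : fget g (j-1) ≤ fget g j := by
    simp only [fget]
    rw [dif_pos (show j - 1 - 1 < n by omega), dif_pos (show j - 1 < n by omega)]
    exact hmono _ _ (by simp only [Fin.mk_le_mk]; omega)
  have hbc : fget g j ≤ fget g (j+1) := by
    simp only [fget]
    rw [dif_pos (show j - 1 < n by omega), dif_pos (show j + 1 - 1 < n by omega)]
    exact hmono _ _ (by simp only [Fin.mk_le_mk]; omega)
  omega

lemma per_g (q : ℂ) {n : ℕ} (p i : ℕ) (hiP : i + p ≤ n - 1) (J : Finset ℕ)
    (hJ : J ⊆ Finset.Icc 1 (n-1))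
    (hJd : ∀ j ∈ J, j ∉ Finset.Icc (i+1) (i+p+1))
    (hiJ : i ∈ J ∨ i = 0)
    (g : Fin n → ℕ) (hmono : ∀ j k : Fin n, j ≤ k → g j ≤ g k) :
    ∑ I ∈ (Finset.Icc (i+1) (i+p)).powerset, (-1:ℂ)^I.card *
      (if (∀ j ∈ peakOf (I ∪ J), fget g (j-1) < fget g (j+1)) then
        q ^ (((I ∪ J).filter (fun j => fget g j = fget g (j+1))).card) *
          (q+1) ^ (Finset.image g Finset.univ).card else 0)
    = qint (p+1) (-q) *
      ∑ U' ∈ J.powerset, ∑ V' ∈ (peakOf J).powerset.filter (fun V' => Disjoint U' V'),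
        (-q)^V'.card * (q-1)^U'.card *
          (if (∀ j ∈ U' ∪ V'.image (· - 1) ∪ V' ∪ Finset.Icc (i+1) (i+p),
              fget g j = fget g (j+1)) then
            (q+1) ^ (Finset.image g Finset.univ).card else 0) := by
  have hmain := main_comb q (fun j => fget g j = fget g (j+1)) p i J hJd hiJ
  have h2 := congrArg (fun z : ℂ => z * ((q+1) ^ (Finset.image g Finset.univ).card)) hmain
  rw [Finset.sum_mul] at h2
  refine Eq.trans (Finset.sum_congr rfl fun I hI => ?_) (Eq.trans h2 ?_)
  · rw [Finset.mem_powerset] at hI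
    have hiff : (∀ j ∈ peakOf (I ∪ J), fget g (j-1) < fget g (j+1)) ↔
        (∀ j ∈ peakOf (I ∪ J),
          ¬(fget g (j-1) = fget g (j-1+1) ∧ fget g j = fget g (j+1))) := by
      refine forall_congr' fun j => imp_congr_right fun hj => ?_
      simp only [peakOf, Finset.mem_filter, Finset.mem_union] at hj
      obtain ⟨hjIJ, hj2, -⟩ := hj
      have hjn : j + 1 ≤ n := by
        rcases hjIJ with h | h
        · have := Finset.mem_Icc.mp (hI h); omega
        · have := Finset.mem_Icc.mp (hJ h); omega
      have hj11 : j - 1 + 1 = j := by omega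
      rw [hj11]
      exact fget_bridge g hmono j hj2 hjn
    by_cases hc : ∀ j ∈ peakOf (I ∪ J),
        ¬(fget g (j-1) = fget g (j-1+1) ∧ fget g j = fget g (j+1))
    · rw [if_pos (hiff.mpr hc), if_pos hc, mul_assoc]
      congr 3
      rw [Finset.card_filter, Finset.card_filter]
      exact Finset.sum_congr rfl fun x _ => by
        by_cases h : fget g x = fget g (x+1) <;> simp [h]
    · rw [if_neg (fun h => hc (hiff.mp h)), if_neg hc]
      simp
  · rw [mul_assoc]
    congr 1
    rw [Finset.sum_mul]
    refine Finset.sum_congr rfl fun U' _ => ?_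
    rw [Finset.sum_mul]
    refine Finset.sum_congr rfl fun V' _ => ?_
    by_cases hc : ∀ j ∈ U' ∪ V'.image (· - 1) ∪ V' ∪ Finset.Icc (i+1) (i+p),
        fget g j = fget g (j+1)
    · simp only [if_pos hc]
      ring
    · simp only [if_neg hc]
      ring

/-- For any `q ∈ ℂ`, `n ≥ p + 1`, `0 ≤ i ≤ n - 1 - p` and `J ⊆ [n-1]`
with `{i+1, …, i+p+1} ∩ J = ∅` and `i ∈ J ∪ {0}`:
`Σ_{I ⊆ {i+1,…,i+p}} (-1)^{|I|} L^{(q)}_{n, I ∪ J}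
  = [p+1]_{-q} · Σ_{U' ⊆ J, V' ⊆ Peak(J), U' ∩ V' = ∅}
      (-q)^{|V'|} (q-1)^{|U'|} η^{(q)}_{n, U' ∪ (V'-1) ∪ V' ∪ {i+1,…,i+p}}`. -/
theorem alternating_sum_eq_qint_mul (q : ℂ) (n p : ℕ) (hp : 1 ≤ p) (hn : p + 1 ≤ n)
    (i : ℕ) (hi : i ≤ n - 1 - p) (J : Finset ℕ) (hJ : J ⊆ Finset.Icc 1 (n - 1))
    (hJdisj : Disjoint (Finset.Icc (i + 1) (i + p + 1)) J)
    (hiJ : i ∈ J ∨ i = 0) :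
    ∑ I ∈ (Finset.Icc (i + 1) (i + p)).powerset,
      ((-1 : ℂ) ^ I.card) • Lq q n (I ∪ J) =
    qint (p + 1) (-q) •
      ∑ U' ∈ J.powerset,
        ∑ V' ∈ (peakOf J).powerset.filter (fun V' => Disjoint U' V'),
          ((-q) ^ V'.card * (q - 1) ^ U'.card) •
            etaq q n (U' ∪ V'.image (· - 1) ∪ V' ∪ Finset.Icc (i + 1) (i + p)) := by
  classical
  have hiP : i + p ≤ n - 1 := by omega
  have hJd : ∀ j ∈ J, j ∉ Finset.Icc (i + 1) (i + p + 1) := fun j hj =>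
    Finset.disjoint_right.mp hJdisj hj
  apply MvPowerSeries.ext
  intro d
  simp only [map_sum, map_smul, smul_eq_mul, MvPowerSeries.coeff_apply, Lq, etaq]
  set base : Finset (Fin n → ℕ) := (Fintype.piFinset fun _ => d.support).filter
    (fun g => (∀ j k : Fin n, j ≤ k → g j ≤ g k) ∧ (∀ j, 1 ≤ g j) ∧ monomialOf g = d)
    with hbase
  have hLseq : ∀ S : Finset ℕ, Lseqs n S d
      = base.filter (fun g => ∀ j ∈ peakOf S, fget g (j-1) < fget g (j+1)) := by
    intro S
    rw [hbase, Finset.filter_filter]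
    simp only [Lseqs]
    apply Finset.filter_congr
    intro g _
    constructor
    · rintro ⟨a, b, c, e⟩; exact ⟨⟨a, b, e⟩, c⟩
    · rintro ⟨⟨a, b, e⟩, c⟩; exact ⟨a, b, c, e⟩
  have hEseq : ∀ S : Finset ℕ, etaSeqs n S d
      = base.filter (fun g => ∀ j ∈ S, fget g j = fget g (j+1)) := by
    intro S
    rw [hbase, Finset.filter_filter]
    simp only [etaSeqs]
    apply Finset.filter_congr
    intro g _
    constructor
    · rintro ⟨a, b, c, e⟩; exact ⟨⟨a, b, e⟩, c⟩
    · rintro ⟨⟨a, b, e⟩, c⟩; exact ⟨a, b, c, e⟩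
  calc ∑ I ∈ (Finset.Icc (i+1) (i+p)).powerset, (-1:ℂ)^I.card *
        ∑ g ∈ Lseqs n (I ∪ J) d,
          q ^ (((I ∪ J).filter fun j => fget g j = fget g (j+1)).card) *
            (q+1) ^ (Finset.image g Finset.univ).card
      = ∑ I ∈ (Finset.Icc (i+1) (i+p)).powerset, ∑ g ∈ base,
          (-1:ℂ)^I.card * (if (∀ j ∈ peakOf (I ∪ J), fget g (j-1) < fget g (j+1)) then
            q ^ (((I ∪ J).filter fun j => fget g j = fget g (j+1)).card) *
              (q+1) ^ (Finset.image g Finset.univ).card else 0) := by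
        refine Finset.sum_congr rfl fun I _ => ?_
        rw [hLseq (I ∪ J), Finset.sum_filter, Finset.mul_sum]
    _ = ∑ g ∈ base, ∑ I ∈ (Finset.Icc (i+1) (i+p)).powerset,
          (-1:ℂ)^I.card * (if (∀ j ∈ peakOf (I ∪ J), fget g (j-1) < fget g (j+1)) then
            q ^ (((I ∪ J).filter fun j => fget g j = fget g (j+1)).card) *
              (q+1) ^ (Finset.image g Finset.univ).card else 0) := Finset.sum_comm
    _ = ∑ g ∈ base, qint (p+1) (-q) *
          ∑ U' ∈ J.powerset, ∑ V' ∈ (peakOf J).powerset.filter (fun V' => Disjoint U' V'),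
            (-q)^V'.card * (q-1)^U'.card *
              (if (∀ j ∈ U' ∪ V'.image (· - 1) ∪ V' ∪ Finset.Icc (i+1) (i+p),
                  fget g j = fget g (j+1)) then
                (q+1) ^ (Finset.image g Finset.univ).card else 0) := by
        refine Finset.sum_congr rfl fun g hg => ?_
        rw [hbase] at hg
        have hmono : ∀ j k : Fin n, j ≤ k → g j ≤ g k :=
          (Finset.mem_filter.mp hg).2.1
        exact per_g q p i hiP J hJ hJd hiJ g hmono
    _ = qint (p+1) (-q) * ∑ g ∈ base,
          ∑ U' ∈ J.powerset, ∑ V' ∈ (peakOf J).powerset.filter (fun V' => Disjoint U' V'),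
            (-q)^V'.card * (q-1)^U'.card *
              (if (∀ j ∈ U' ∪ V'.image (· - 1) ∪ V' ∪ Finset.Icc (i+1) (i+p),
                  fget g j = fget g (j+1)) then
                (q+1) ^ (Finset.image g Finset.univ).card else 0) :=
        (Finset.mul_sum _ _ _).symm
    _ = qint (p+1) (-q) *
          ∑ U' ∈ J.powerset, ∑ V' ∈ (peakOf J).powerset.filter (fun V' => Disjoint U' V'),
            ((-q)^V'.card * (q-1)^U'.card) *
              ∑ g ∈ etaSeqs n (U' ∪ V'.image (· - 1) ∪ V' ∪ Finset.Icc (i+1) (i+p)) d,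
                (q+1) ^ (Finset.image g Finset.univ).card := by
        congr 1
        rw [Finset.sum_comm]
        refine Finset.sum_congr rfl fun U' _ => ?_
        rw [Finset.sum_comm]
        refine Finset.sum_congr rfl fun V' _ => ?_
        rw [hEseq, ← Finset.mul_sum]
        congr 1
        exact (Finset.sum_filter _ _).symm


end ExtPeaks
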